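/- Let p0 ∈ (1,∞) and let X̃_{p0} be the first generation space with τ_n = Σ_{j=1}^{e_n} s_{nj} and F(n,i) = m_{n,j(n,i)}. Then M^c is not of strong type (p0,p0): for f_n = δ_{x_n}, ‖M^c f_n‖_{p0}^{p0} ≥ e_n · (n c_n/(1+n)^{p0}) · ‖f_n‖_{p0}^{p0}, which tends to infinity since e_n → ∞ and n c_n/(1+n)^{p0} → 1. -/

import Mathlib

open scoped ENNReal Classical
open Filter Set

/-- The point set of a first generation space: roots `x_n` (`Sum.inl n`) and
leaves `x_{n,i}` (`Sum.inr ⟨n, i⟩`, `i` among `τ n` leaves of branch `n`). -/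
abbrev XPt (τ : ℕ → ℕ) := ℕ ⊕ (Σ n : ℕ, Fin (τ n))

namespace FirstGen

/-- The root `x_n`. -/
def root (τ : ℕ → ℕ) (n : ℕ) : XPt τ := Sum.inl n

/-- The leaf `x_{n,i}`. -/
def leaf (τ : ℕ → ℕ) (n : ℕ) (i : Fin (τ n)) : XPt τ := Sum.inr ⟨n, i⟩

/-- The branch `S_n = {x_n, x_{n,1}, …, x_{n,τ_n}}`. -/
def branch (τ : ℕ → ℕ) (n : ℕ) : Set (XPt τ) :=
  {x | x = root τ n ∨ ∃ i, x = leaf τ n i}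

/-- The two-point set `{x_n, x_{n,i}}`. -/
def pairB (τ : ℕ → ℕ) (n : ℕ) (i : Fin (τ n)) : Set (XPt τ) :=
  {root τ n, leaf τ n i}

/-- The collection of all open balls of `X_τ`: singletons, pairs `{x_n, x_{n,i}}`,
branches `S_n` and the whole space. -/
def balls (τ : ℕ → ℕ) : Set (Set (XPt τ)) :=
  {B | (∃ x, B = {x}) ∨ (∃ n i, B = pairB τ n i) ∨ (∃ n, B = branch τ n) ∨ B = Set.univ}

/-- The ball `B(x, 3/2)` centered at `x`. -/
def cball (τ : ℕ → ℕ) : XPt τ → Set (XPt τ)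
  | Sum.inl n => branch τ n
  | Sum.inr ⟨n, i⟩ => pairB τ n i

/-- The weight (measure of the singleton): `μ({x_n}) = d n`,
`μ({x_{n,i}}) = d n * F n i`. -/
noncomputable def weight (τ : ℕ → ℕ) (d : ℕ → ℝ≥0∞)
    (F : (n : ℕ) → Fin (τ n) → ℝ≥0∞) : XPt τ → ℝ≥0∞
  | Sum.inl n => d n
  | Sum.inr ⟨n, i⟩ => d n * F n i

/-- Measure of a set. -/
noncomputable def mass {τ : ℕ → ℕ} (w : XPt τ → ℝ≥0∞) (s : Set (XPt τ)) : ℝ≥0∞ :=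
  ∑' x : s, w x.1

/-- Average `A_s(f)` of `f` over `s`. -/
noncomputable def avg {τ : ℕ → ℕ} (w f : XPt τ → ℝ≥0∞) (s : Set (XPt τ)) : ℝ≥0∞ :=
  (∑' x : s, f x.1 * w x.1) / mass w s

/-- The centered Hardy–Littlewood maximal operator of `X_τ` (the three balls
centered at `x` are `{x}`, `cball τ x` and the whole space). -/
noncomputable def Mc {τ : ℕ → ℕ} (w f : XPt τ → ℝ≥0∞) (x : XPt τ) : ℝ≥0∞ :=
  avg w f {x} ⊔ avg w f (cball τ x) ⊔ avg w f Set.univ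

/-- The non-centered Hardy–Littlewood maximal operator of `X_τ`. -/
noncomputable def Mnc {τ : ℕ → ℕ} (w f : XPt τ → ℝ≥0∞) (x : XPt τ) : ℝ≥0∞ :=
  ⨆ (B : Set (XPt τ)) (_ : B ∈ balls τ) (_ : x ∈ B), avg w f B

/-- `‖f‖_p^p = ∑_x f(x)^p μ({x})`. -/
noncomputable def lpp {τ : ℕ → ℕ} (w : XPt τ → ℝ≥0∞) (p : ℝ) (f : XPt τ → ℝ≥0∞) : ℝ≥0∞ :=
  ∑' x, f x ^ p * w x

/-- `T` is of strong type `(p,p)` (stated on the level of `p`-th powers). -/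
def strongT {τ : ℕ → ℕ} (w : XPt τ → ℝ≥0∞)
    (T : (XPt τ → ℝ≥0∞) → XPt τ → ℝ≥0∞) (p : ℝ) : Prop :=
  ∃ C : ℝ≥0∞, C ≠ ∞ ∧ ∀ f, lpp w p (T f) ≤ C * lpp w p f

/-- `T` is of weak type `(p,p)` (stated on the level of `p`-th powers). -/
def weakT {τ : ℕ → ℕ} (w : XPt τ → ℝ≥0∞)
    (T : (XPt τ → ℝ≥0∞) → XPt τ → ℝ≥0∞) (p : ℝ) : Prop :=
  ∃ C : ℝ≥0∞, C ≠ ∞ ∧ ∀ f (l : ℝ≥0∞), l ^ p * mass w {x | l < T f x} ≤ C * lpp w p f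

/-- `‖g‖_{p,∞}^p`. -/
noncomputable def wnormP {τ : ℕ → ℕ} (w : XPt τ → ℝ≥0∞) (p : ℝ) (g : XPt τ → ℝ≥0∞) : ℝ≥0∞ :=
  ⨆ l : ℝ≥0∞, l ^ p * mass w {x | l < g x}

/-- The Dirac function `δ_{x_n}`. -/
noncomputable def dirac (τ : ℕ → ℕ) (n : ℕ) : XPt τ → ℝ≥0∞ :=
  fun x => if x = root τ n then 1 else 0

end FirstGen

open FirstGen

/-- in the first generation space `X̃_{p₀}`, `p₀ ∈ (1,∞)` (branch `N`
here is the paper's branch `N+1`; it has `τ N = ∑_{j=1}^{e_{N+1}} s_{N+1,j}` leaves,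
the `i`-th of weight `d N · m_{N+1, j(N+1,i+1)}`), the centered maximal operator is
not of strong type `(p₀,p₀)`: for `f_N = δ_{x_N}`,
`‖M^c f_N‖_{p₀}^{p₀} ≥ e_{N+1} · ((N+1) c_{N+1}/(N+2)^{p₀}) · ‖f_N‖_{p₀}^{p₀}`,
which tends to infinity since `e_n → ∞` and `n c_n/(1+n)^{p₀} → 1`. -/

lemma tsum_pair' {α : Type*} (f : α → ℝ≥0∞) {a b : α} (h : a ≠ b) :
    ∑' x : ({a, b} : Set α), f x = f a + f b := by
  rw [tsum_subtype]
  rw [tsum_eq_sum (s := {a, b}) (by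
    intro x hx
    simp only [Finset.mem_insert, Finset.mem_singleton] at hx
    rw [Set.indicator_of_notMem]; simpa using hx)]
  rw [Finset.sum_pair h]
  simp [Set.indicator_of_mem]

section Aux
variable {p0 : ℝ} (hp0 : 1 < p0) {c : ℕ → ℕ}
  (hc : ∀ n : ℕ, c n = ⌊((n : ℝ) + 1) ^ p0 / (n : ℝ)⌋₊)

include hp0 hc in
lemma cLB {n : ℕ} (hn : 1 ≤ n) :
    ((n : ℝ) + 1) ^ p0 / n - 1 < c n ∧ (c n : ℝ) ≤ ((n : ℝ) + 1) ^ p0 / n := by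
  have hnR : (0:ℝ) < n := by exact_mod_cast hn
  have hx : (0:ℝ) ≤ ((n : ℝ) + 1) ^ p0 / n :=
    div_nonneg (Real.rpow_nonneg (by positivity) _) hnR.le
  refine ⟨?_, ?_⟩
  · rw [hc]; exact Nat.sub_one_lt_floor _
  · rw [hc]; exact Nat.floor_le hx

include hp0 hc in
lemma part2' :
    Tendsto (fun n : ℕ => (n : ℝ) * (c n : ℝ) / (1 + (n : ℝ)) ^ p0) atTop (nhds 1) := by
  have h1n : Tendsto (fun n : ℕ => 1 + (n : ℝ)) atTop atTop :=
    tendsto_atTop_add_const_left _ 1 tendsto_natCast_atTop_atTop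
  have hz : Tendsto (fun n : ℕ => (1 + (n : ℝ)) ^ (-(p0 - 1))) atTop (nhds 0) :=
    (tendsto_rpow_neg_atTop (by linarith)).comp h1n
  have hlo : Tendsto (fun n : ℕ => 1 - (1 + (n : ℝ)) ^ (-(p0 - 1))) atTop (nhds 1) := by
    have := hz.const_sub 1
    simpa using this
  refine tendsto_of_tendsto_of_tendsto_of_le_of_le' hlo tendsto_const_nhds ?_ ?_
  · filter_upwards [eventually_ge_atTop 1] with n hn
    have hnR : (0:ℝ) < n := by exact_mod_cast hn
    have h1nR : (0:ℝ) < 1 + n := by linarith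
    have hp : (0:ℝ) < (1 + (n:ℝ)) ^ p0 := Real.rpow_pos_of_pos h1nR _
    have hlb := (cLB hp0 hc hn).1
    -- n * c n > (n+1)^p0 - n
    have h2 : ((n : ℝ) + 1) ^ p0 - n < n * c n := by
      have := mul_lt_mul_of_pos_left hlb hnR
      rw [mul_sub, mul_one, mul_div_cancel₀ _ hnR.ne'] at this
      linarith
    rw [sub_le_iff_le_add, div_add' _ _ _ hp.ne', one_le_div hp]
    have hcomm : ((n:ℝ) + 1) = 1 + n := by ring
    have hub : (1 + (n:ℝ)) ^ (-(p0-1)) * (1 + (n:ℝ)) ^ p0 = 1 + (n:ℝ) := by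
      rw [← Real.rpow_add h1nR]
      norm_num
    rw [hub, ← hcomm]
    nlinarith [h2]
  · filter_upwards [eventually_ge_atTop 1] with n hn
    have hnR : (0:ℝ) < n := by exact_mod_cast hn
    have h1nR : (0:ℝ) < 1 + n := by linarith
    have hp : (0:ℝ) < (1 + (n:ℝ)) ^ p0 := Real.rpow_pos_of_pos h1nR _
    have hub := (cLB hp0 hc hn).2
    rw [div_le_one hp]
    have := mul_le_mul_of_nonneg_left hub hnR.le
    rw [mul_div_cancel₀ _ hnR.ne'] at this
    calc (n:ℝ) * c n ≤ ((n:ℝ)+1) ^ p0 := by linarith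
    _ = (1 + (n:ℝ)) ^ p0 := by ring_nf

end Aux


section EAux
variable {p0 : ℝ} (hp0 : 1 < p0) {c : ℕ → ℕ}
  (hc : ∀ n : ℕ, c n = ⌊((n : ℝ) + 1) ^ p0 / (n : ℝ)⌋₊)
  {e : ℕ → ℕ}
  (he : ∀ n : ℕ, e n = sSup {k : ℕ | 1 ≤ k ∧ 2 ^ (k - 1) ≤ c n ∧
      ((1 : ℝ) + n) ^ (-p0) ≤ (2 : ℝ) ^ (1 - (k : ℝ) - p0)})

lemma eSetBdd (n : ℕ) : BddAbove {k : ℕ | 1 ≤ k ∧ 2 ^ (k - 1) ≤ c n ∧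
    ((1 : ℝ) + n) ^ (-p0) ≤ (2 : ℝ) ^ (1 - (k : ℝ) - p0)} := by
  refine ⟨c n, fun k hk => ?_⟩
  obtain ⟨h1, h2, _⟩ := hk
  have := @Nat.lt_two_pow_self (k - 1)
  omega

include hp0 hc in
lemma oneMemESet {n : ℕ} (hn : 1 ≤ n) : 1 ∈ {k : ℕ | 1 ≤ k ∧ 2 ^ (k - 1) ≤ c n ∧
    ((1 : ℝ) + n) ^ (-p0) ≤ (2 : ℝ) ^ (1 - (k : ℝ) - p0)} := by
  have hnR : (1:ℝ) ≤ n := by exact_mod_cast hn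
  refine ⟨le_refl 1, ?_, ?_⟩
  · -- 1 ≤ c n
    rw [hc]
    norm_num
    rw [le_div_iff₀ (by linarith)]
    calc (1:ℝ) * n = n := one_mul _
    _ = (n:ℝ) ^ (1:ℝ) := (Real.rpow_one _).symm
    _ ≤ ((n:ℝ)+1) ^ (1:ℝ) := by
        rw [Real.rpow_one, Real.rpow_one]; linarith
    _ ≤ ((n:ℝ)+1) ^ p0 := Real.rpow_le_rpow_of_exponent_le (by linarith) hp0.le
  · have : (1:ℝ) - (1:ℕ) - p0 = -p0 := by norm_num
    rw [this, Real.rpow_neg (by linarith : (0:ℝ) ≤ 1 + n), Real.rpow_neg (by norm_num : (0:ℝ) ≤ 2)]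
    have h2n : (2:ℝ) ^ p0 ≤ (1 + (n:ℝ)) ^ p0 :=
      Real.rpow_le_rpow (by norm_num) (by linarith) (by linarith)
    exact inv_anti₀ (Real.rpow_pos_of_pos (by norm_num) _) h2n

include hp0 hc he in
lemma eMem {n : ℕ} (hn : 1 ≤ n) : e n ∈ {k : ℕ | 1 ≤ k ∧ 2 ^ (k - 1) ≤ c n ∧
    ((1 : ℝ) + n) ^ (-p0) ≤ (2 : ℝ) ^ (1 - (k : ℝ) - p0)} := by
  rw [he]
  exact Nat.sSup_mem ⟨1, oneMemESet hp0 hc hn⟩ (eSetBdd n)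

include hp0 hc he in
lemma ePos {n : ℕ} (hn : 1 ≤ n) : 1 ≤ e n :=
  (eMem hp0 hc he hn).1

include hp0 hc he in
lemma eClosed {n j : ℕ} (hn : 1 ≤ n) (hj1 : 1 ≤ j) (hje : j ≤ e n) :
    2 ^ (j - 1) ≤ c n ∧ ((1 : ℝ) + n) ^ (-p0) ≤ (2 : ℝ) ^ (1 - (j : ℝ) - p0) := by
  obtain ⟨he1, hce, hpe⟩ := eMem hp0 hc he hn
  constructor
  · exact le_trans (Nat.pow_le_pow_right (by norm_num) (by omega)) hce
  · refine le_trans hpe (Real.rpow_le_rpow_of_exponent_le (by norm_num) ?_)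
    have : (j:ℝ) ≤ (e n : ℝ) := by exact_mod_cast hje
    linarith

include hp0 hc he in
lemma part1' : Tendsto (fun n : ℕ => ((e n : ℕ) : ℝ)) atTop atTop := by
  apply tendsto_natCast_atTop_atTop.comp
  rw [Filter.tendsto_atTop]
  intro K
  set K' := max K 1 with hK'
  have hg : Tendsto (fun n : ℕ => ((n:ℝ)+1) ^ (p0-1)) atTop atTop :=
    (tendsto_rpow_atTop (by linarith)).comp
      (tendsto_atTop_add_const_right _ 1 tendsto_natCast_atTop_atTop)
  have h1n : Tendsto (fun n : ℕ => 1 + (n : ℝ)) atTop atTop :=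
    tendsto_atTop_add_const_left _ 1 tendsto_natCast_atTop_atTop
  have hz : Tendsto (fun n : ℕ => (1 + (n:ℝ)) ^ (-p0)) atTop (nhds 0) :=
    (tendsto_rpow_neg_atTop (by linarith)).comp h1n
  have hpos : (0:ℝ) < 2 ^ (1 - (K' : ℝ) - p0) := Real.rpow_pos_of_pos (by norm_num) _
  filter_upwards [hg.eventually_ge_atTop ((2 ^ (K' - 1) : ℕ) + 1),
    hz.eventually_lt_const hpos, eventually_ge_atTop 1] with n hgn hzn hn
  have hnR : (0:ℝ) < n := by exact_mod_cast hn
  have hmem : K' ∈ {k : ℕ | 1 ≤ k ∧ 2 ^ (k - 1) ≤ c n ∧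
      ((1 : ℝ) + n) ^ (-p0) ≤ (2 : ℝ) ^ (1 - (k : ℝ) - p0)} := by
    refine ⟨le_max_right _ _, ?_, hzn.le⟩
    -- 2^(K'-1) ≤ c n
    have hdiv : ((n:ℝ)+1) ^ (p0-1) ≤ ((n:ℝ)+1) ^ p0 / n := by
      rw [le_div_iff₀ hnR]
      calc ((n:ℝ)+1) ^ (p0-1) * n ≤ ((n:ℝ)+1) ^ (p0-1) * ((n:ℝ)+1) := by
            apply mul_le_mul_of_nonneg_left (by linarith) (Real.rpow_nonneg (by linarith) _)
      _ = ((n:ℝ)+1) ^ p0 := by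
            rw [← Real.rpow_add_one (by linarith : ((n:ℝ)+1) ≠ 0)]
            norm_num
    have hflb : ((n:ℝ)+1) ^ p0 / n - 1 < c n := by
      rw [hc]; exact Nat.sub_one_lt_floor _
    have : ((2 ^ (K' - 1) : ℕ) : ℝ) < c n := by
      have := le_trans hgn hdiv
      linarith
    exact_mod_cast this.le
  rw [he]
  exact le_trans (le_max_left K 1) (le_csSup (eSetBdd n) hmem)

end EAux

lemma mGe1 {p0 jr mj A : ℝ} (hp0 : 1 < p0) (hpos : 0 < 1 + mj)
    (heq : (2:ℝ) ^ (1 - jr) * (1 + mj) ^ (-p0) = A)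
    (hle : A ≤ (2:ℝ) ^ (1 - jr - p0)) : 1 ≤ mj := by
  have h2 : (0:ℝ) < 2 ^ (1 - jr) := Real.rpow_pos_of_pos (by norm_num) _
  have hsplit : (2:ℝ) ^ (1 - jr - p0) = 2 ^ (1 - jr) * 2 ^ (-p0) := by
    rw [← Real.rpow_add (by norm_num)]; ring_nf
  have hstep : (1 + mj) ^ (-p0) ≤ (2:ℝ) ^ (-p0) := by
    have : (2:ℝ) ^ (1 - jr) * (1 + mj) ^ (-p0) ≤ 2 ^ (1 - jr) * 2 ^ (-p0) := by
      rw [heq, ← hsplit]; exact hle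
    exact le_of_mul_le_mul_left this h2
  rw [Real.rpow_neg hpos.le, Real.rpow_neg (by norm_num : (0:ℝ) ≤ 2)] at hstep
  by_contra hcon
  push_neg at hcon
  have hlt : (1 + mj) ^ p0 < (2:ℝ) ^ p0 :=
    Real.rpow_lt_rpow hpos.le (by linarith) (by linarith)
  have hp1 : (0:ℝ) < (1 + mj) ^ p0 := Real.rpow_pos_of_pos hpos _
  have := (inv_le_inv₀ hp1 (Real.rpow_pos_of_pos (by norm_num) _)).mp hstep
  linarith

lemma sFact {mj X : ℝ} {sv : ℕ} (hm : 0 < mj)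
    (hs : sv = sInf {k : ℕ | 1 ≤ k ∧ X ≤ (k : ℝ) * mj}) :
    1 ≤ sv ∧ X ≤ (sv : ℝ) * mj := by
  have hne : {k : ℕ | 1 ≤ k ∧ X ≤ (k : ℝ) * mj}.Nonempty := by
    refine ⟨max 1 ⌈X / mj⌉₊, le_max_left _ _, ?_⟩
    have h1 : X / mj ≤ (⌈X / mj⌉₊ : ℝ) := Nat.le_ceil _
    have h2 : ((⌈X / mj⌉₊ : ℕ) : ℝ) ≤ ((max 1 ⌈X / mj⌉₊ : ℕ) : ℝ) := by
      exact_mod_cast le_max_right 1 ⌈X / mj⌉₊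
    calc X = (X / mj) * mj := by field_simp
    _ ≤ ((max 1 ⌈X / mj⌉₊ : ℕ) : ℝ) * mj :=
        mul_le_mul_of_nonneg_right (le_trans h1 h2) hm.le
  have := Nat.sInf_mem hne
  rw [← hs] at this
  exact this


section JAux
variable {e : ℕ → ℕ} {s : ℕ → ℕ → ℕ} {J : ℕ → ℕ → ℕ}
  (hJ : ∀ n i : ℕ, J n i = sInf {k : ℕ | 1 ≤ k ∧ k ≤ e n ∧
    i ≤ ∑ j ∈ Finset.Icc 1 k, s n j})

include hJ in
lemma Jblock {n j i : ℕ} (hj1 : 1 ≤ j) (hje : j ≤ e n)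
    (hlo : ∑ x ∈ Finset.Icc 1 (j - 1), s n x < i)
    (hhi : i ≤ ∑ x ∈ Finset.Icc 1 j, s n x) :
    J n i = j := by
  rw [hJ]
  have hjT : j ∈ {k : ℕ | 1 ≤ k ∧ k ≤ e n ∧ i ≤ ∑ x ∈ Finset.Icc 1 k, s n x} :=
    ⟨hj1, hje, hhi⟩
  refine le_antisymm (Nat.sInf_le hjT) ?_
  by_contra hcon
  push_neg at hcon
  have hmem := Nat.sInf_mem ⟨j, hjT⟩
  obtain ⟨h1, _, h3⟩ := hmem
  have hsub : ∑ x ∈ Finset.Icc 1 (sInf {k : ℕ | 1 ≤ k ∧ k ≤ e n ∧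
      i ≤ ∑ x ∈ Finset.Icc 1 k, s n x}), s n x ≤ ∑ x ∈ Finset.Icc 1 (j - 1), s n x :=
    Finset.sum_le_sum_of_subset (Finset.Icc_subset_Icc_right (by omega))
  omega

include hJ in
lemma JRange {n i : ℕ} (he1 : 1 ≤ e n) (h1 : 1 ≤ i)
    (h2 : i ≤ ∑ j ∈ Finset.Icc 1 (e n), s n j) :
    1 ≤ J n i ∧ J n i ≤ e n := by
  rw [hJ]
  have hmem := Nat.sInf_mem (⟨e n, he1, le_rfl, h2⟩ :
    Set.Nonempty {k : ℕ | 1 ≤ k ∧ k ≤ e n ∧ i ≤ ∑ j ∈ Finset.Icc 1 k, s n j})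
  exact ⟨hmem.1, hmem.2.1⟩

include hJ in
lemma groupSum (g : ℕ → ℝ≥0∞) {n : ℕ} :
    ∀ k, k ≤ e n →
      ∑ i ∈ Finset.Icc 1 (∑ j ∈ Finset.Icc 1 k, s n j), g (J n i)
        = ∑ j ∈ Finset.Icc 1 k, (s n j : ℝ≥0∞) * g j := by
  intro k
  induction k with
  | zero => simp
  | succ k ih =>
    intro hk
    have hik := ih (by omega)
    have hSS : (∑ j ∈ Finset.Icc 1 (k+1), s n j)
        = (∑ j ∈ Finset.Icc 1 k, s n j) + s n (k+1) :=
      Finset.sum_Icc_succ_top (by omega) _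
    have hSk : (∑ j ∈ Finset.Icc 1 k, s n j) ≤ ∑ j ∈ Finset.Icc 1 (k+1), s n j := by omega
    have hIcc : ∀ t : ℕ, Finset.Icc 1 t = Finset.Ioc 0 t := by
      intro t; rw [← Finset.Icc_add_one_left_eq_Ioc, zero_add]
    rw [hIcc (∑ j ∈ Finset.Icc 1 (k+1), s n j),
      ← Finset.sum_Ioc_consecutive _ (Nat.zero_le _) hSk,
      ← hIcc, hik]
    have hblock : ∑ i ∈ Finset.Ioc (∑ j ∈ Finset.Icc 1 k, s n j)
        (∑ j ∈ Finset.Icc 1 (k+1), s n j), g (J n i)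
        = (s n (k+1) : ℝ≥0∞) * g (k+1) := by
      rw [Finset.sum_congr rfl (fun i hi => ?_), Finset.sum_const, Nat.card_Ioc,
        nsmul_eq_mul]
      · have hc : (∑ j ∈ Finset.Icc 1 (k+1), s n j) - (∑ j ∈ Finset.Icc 1 k, s n j)
            = s n (k+1) := by omega
        rw [hc]
      · rw [Finset.mem_Ioc] at hi
        congr 1
        refine Jblock hJ (by omega) hk ?_ hi.2
        simpa using hi.1
    rw [hblock, Finset.sum_Icc_succ_top (by omega : 1 ≤ k + 1)]
end JAux

theorem Xtilde_cen_not_strong (p0 : ℝ) (hp0 : 1 < p0)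
    (c : ℕ → ℕ) (hc : ∀ n : ℕ, c n = ⌊((n : ℝ) + 1) ^ p0 / (n : ℝ)⌋₊)
    (e : ℕ → ℕ) (he : ∀ n : ℕ, e n = sSup {k : ℕ | 1 ≤ k ∧ 2 ^ (k - 1) ≤ c n ∧
      ((1 : ℝ) + n) ^ (-p0) ≤ (2 : ℝ) ^ (1 - (k : ℝ) - p0)})
    (m : ℕ → ℕ → ℝ)
    (hm : ∀ n j : ℕ, 0 < 1 + m n j ∧
      (2 : ℝ) ^ (1 - (j : ℝ)) * (1 + m n j) ^ (-p0) = ((1 : ℝ) + n) ^ (-p0))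
    (s : ℕ → ℕ → ℕ)
    (hs : ∀ n j : ℕ, s n j = sInf {k : ℕ | 1 ≤ k ∧
      (2 : ℝ) ^ (1 - (j : ℝ)) * n * c n ≤ (k : ℝ) * m n j})
    (J : ℕ → ℕ → ℕ)
    (hJ : ∀ n i : ℕ, J n i = sInf {k : ℕ | 1 ≤ k ∧ k ≤ e n ∧
      i ≤ ∑ j ∈ Finset.Icc 1 k, s n j})
    (τ : ℕ → ℕ) (hτ : ∀ N : ℕ, τ N = ∑ j ∈ Finset.Icc 1 (e (N + 1)), s (N + 1) j)
    (d : ℕ → ℝ≥0∞) (hd : ∀ n, 0 < d n ∧ d n ≠ ∞) (hd1 : d 0 = 1)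
    (F : (N : ℕ) → Fin (τ N) → ℝ≥0∞)
    (hF : ∀ N i, F N i = ENNReal.ofReal (m (N + 1) (J (N + 1) ((i : ℕ) + 1))))
    (hhalf : ∀ n, mass (weight τ d F) (branch τ (n + 1))
      = mass (weight τ d F) (branch τ n) / 2) :
    (Tendsto (fun n : ℕ => (e n : ℝ)) atTop atTop) ∧
    (Tendsto (fun n : ℕ => (n : ℝ) * (c n : ℝ) / (1 + (n : ℝ)) ^ p0)
      atTop (nhds 1)) ∧
    (∀ N : ℕ,
      (e (N + 1) : ℝ≥0∞)
          * ENNReal.ofReal ((((N : ℝ) + 1) * (c (N + 1) : ℝ)) / ((N : ℝ) + 2) ^ p0)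
          * lpp (weight τ d F) p0 (dirac τ N)
        ≤ lpp (weight τ d F) p0 (Mc (weight τ d F) (dirac τ N))) ∧
    ¬ strongT (weight τ d F) (Mc (weight τ d F)) p0 := by
  have hpart1 : Tendsto (fun n : ℕ => ((e n : ℕ) : ℝ)) atTop atTop := part1' hp0 hc he
  have hpart2 := part2' hp0 hc
  have hlppd : ∀ N : ℕ, lpp (weight τ d F) p0 (dirac τ N) = d N := by
    intro N
    have hz : ∀ b : XPt τ, b ≠ root τ N →
        dirac τ N b ^ p0 * weight τ d F b = 0 := by
      intro b hb
      show (if b = root τ N then (1:ℝ≥0∞) else 0) ^ p0 * weight τ d F b = 0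
      rw [if_neg hb, ENNReal.zero_rpow_of_pos (by linarith), zero_mul]
    have h0 : lpp (weight τ d F) p0 (dirac τ N)
        = ∑' x, dirac τ N x ^ p0 * weight τ d F x := rfl
    rw [h0, tsum_eq_single (root τ N) hz]
    show (if root τ N = root τ N then (1:ℝ≥0∞) else 0) ^ p0 * weight τ d F (root τ N) = d N
    rw [if_pos rfl, ENNReal.one_rpow, one_mul]
    rfl
  have hmain : ∀ N : ℕ,
      (e (N + 1) : ℝ≥0∞)
          * ENNReal.ofReal ((((N : ℝ) + 1) * (c (N + 1) : ℝ)) / ((N : ℝ) + 2) ^ p0)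
          * lpp (weight τ d F) p0 (dirac τ N)
        ≤ lpp (weight τ d F) p0 (Mc (weight τ d F) (dirac τ N)) := by
    intro N
    set n := N + 1 with hn
    set w := weight τ d F with hw
    set f := dirac τ N with hf
    have hn1 : 1 ≤ n := by omega
    have hdN0 : d N ≠ 0 := (hd N).1.ne'
    have hdNt : d N ≠ ∞ := (hd N).2
    have he1 : 1 ≤ e n := ePos hp0 hc he hn1
    set g : ℕ → ℝ≥0∞ := fun j => ENNReal.ofReal ((1 + m n j) ^ (-p0) * m n j) with hg
    have hτN : τ N = ∑ j ∈ Finset.Icc 1 (e n), s n j := hτ N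
    have hJr : ∀ i : Fin (τ N), 1 ≤ J n (↑i + 1) ∧ J n (↑i + 1) ≤ e n := by
      intro i
      have hi := i.isLt
      refine JRange hJ he1 (by omega) ?_
      rw [← hτN]
      omega
    have hm1 : ∀ i : Fin (τ N), 1 ≤ m n (J n (↑i + 1)) := by
      intro i
      obtain ⟨hj1, hje⟩ := hJr i
      exact mGe1 hp0 (hm n _).1 (hm n _).2 (eClosed hp0 hc he hn1 hj1 hje).2
    have hstep : ∀ i : Fin (τ N),
        d N * g (J n (↑i + 1)) ≤ (Mc w f (leaf τ N i)) ^ p0 * w (leaf τ N i) := by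
      intro i
      have hmr1 : 1 ≤ m n (J n (↑i + 1)) := hm1 i
      set mr := m n (J n (↑i + 1)) with hmr
      have hne : root τ N ≠ leaf τ N i := by simp [root, leaf]
      have hwroot : w (root τ N) = d N := rfl
      have hwleaf : w (leaf τ N i) = d N * ENNReal.ofReal mr := by
        rw [hw]
        show d N * F N i = _
        rw [hF]
      have hfroot : f (root τ N) = 1 := if_pos rfl
      have hfleaf : f (leaf τ N i) = 0 := if_neg (by simp [root, leaf])
      have hmass : mass w (pairB τ N i) = d N * ENNReal.ofReal (1 + mr) := by
        have h0 : mass w (pairB τ N i)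
            = ∑' x : ({root τ N, leaf τ N i} : Set (XPt τ)), w ↑x := rfl
        rw [h0, tsum_pair' w hne, hwroot, hwleaf,
          ENNReal.ofReal_add zero_le_one (by linarith), ENNReal.ofReal_one,
          mul_add, mul_one]
      have hnum : (∑' x : ({root τ N, leaf τ N i} : Set (XPt τ)), f ↑x * w ↑x) = d N := by
        rw [tsum_pair' (fun x => f x * w x) hne]
        rw [hfroot, hfleaf, one_mul, zero_mul, add_zero, hwroot]
      have havg : avg w f (pairB τ N i) = (ENNReal.ofReal (1 + mr))⁻¹ := by
        have h0 : avg w f (pairB τ N i)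
            = (∑' x : ({root τ N, leaf τ N i} : Set (XPt τ)), f ↑x * w ↑x)
              / mass w (pairB τ N i) := rfl
        rw [h0, hnum, hmass, div_eq_mul_inv,
          ENNReal.mul_inv (Or.inl hdN0) (Or.inl hdNt), ← mul_assoc,
          ENNReal.mul_inv_cancel hdN0 hdNt, one_mul]
      have hMc : (ENNReal.ofReal (1 + mr))⁻¹ ≤ Mc w f (leaf τ N i) := by
        rw [← havg]
        have h0 : Mc w f (leaf τ N i)
            = avg w f {leaf τ N i} ⊔ avg w f (pairB τ N i) ⊔ avg w f Set.univ := rfl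
        rw [h0]
        exact le_sup_of_le_left le_sup_right
      have hpow : ENNReal.ofReal ((1 + mr) ^ (-p0)) ≤ (Mc w f (leaf τ N i)) ^ p0 := by
        have h1 : ((ENNReal.ofReal (1 + mr))⁻¹) ^ p0 = ENNReal.ofReal ((1 + mr) ^ (-p0)) := by
          rw [← ENNReal.ofReal_inv_of_pos (by linarith),
            ENNReal.ofReal_rpow_of_pos (by positivity)]
          congr 1
          rw [Real.inv_rpow (by linarith), Real.rpow_neg (by linarith)]
        rw [← h1]
        exact ENNReal.rpow_le_rpow hMc (by linarith)
      simp only [hg]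
      rw [hwleaf, ENNReal.ofReal_mul (Real.rpow_nonneg (by linarith) _)]
      calc d N * (ENNReal.ofReal ((1 + mr) ^ (-p0)) * ENNReal.ofReal mr)
          = ENNReal.ofReal ((1 + mr) ^ (-p0)) * (d N * ENNReal.ofReal mr) := by ring
      _ ≤ (Mc w f (leaf τ N i)) ^ p0 * (d N * ENNReal.ofReal mr) :=
          mul_le_mul' hpow le_rfl
    have hinj : Function.Injective (fun i : Fin (τ N) => leaf τ N i) := by
      intro a b hab
      simpa [leaf] using hab
    have hsum1 : (∑' i : Fin (τ N), (Mc w f (leaf τ N i)) ^ p0 * w (leaf τ N i))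
        ≤ lpp w p0 (Mc w f) :=
      ENNReal.tsum_comp_le_tsum_of_injective hinj (fun x => (Mc w f x) ^ p0 * w x)
    rw [tsum_fintype] at hsum1
    have hsum2 : ∑ i : Fin (τ N), d N * g (J n (↑i + 1))
        ≤ ∑ i : Fin (τ N), (Mc w f (leaf τ N i)) ^ p0 * w (leaf τ N i) :=
      Finset.sum_le_sum (fun i _ => hstep i)
    have hsum3 : ∑ i : Fin (τ N), d N * g (J n (↑i + 1))
        = d N * ∑ j ∈ Finset.Icc 1 (e n), (s n j : ℝ≥0∞) * g j := by
      rw [← Finset.mul_sum]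
      congr 1
      rw [Fin.sum_univ_eq_sum_range (fun k => g (J n (k + 1)))]
      have h1 : ∑ i ∈ Finset.Icc 1 (τ N), g (J n i)
          = ∑ j ∈ Finset.Icc 1 (e n), (s n j : ℝ≥0∞) * g j := by
        rw [hτN]
        exact groupSum hJ g (e n) le_rfl
      rw [← h1, ← Finset.Ico_add_one_right_eq_Icc, Finset.sum_Ico_eq_sum_range]
      have hc1 : τ N + 1 - 1 = τ N := by omega
      rw [hc1]
      exact Finset.sum_congr rfl (fun i _ => by rw [Nat.add_comm])
    have hjb : ∀ j ∈ Finset.Icc 1 (e n),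
        ENNReal.ofReal ((n : ℝ) * (c n : ℝ) * (1 + (n : ℝ)) ^ (-p0))
          ≤ (s n j : ℝ≥0∞) * g j := by
      intro j hj
      obtain ⟨hj1, hje⟩ := Finset.mem_Icc.mp hj
      have hm1j : 1 ≤ m n j :=
        mGe1 hp0 (hm n j).1 (hm n j).2 (eClosed hp0 hc he hn1 hj1 hje).2
      have hsf := sFact (by linarith : (0:ℝ) < m n j) (hs n j)
      simp only [hg]
      rw [show ((s n j : ℕ) : ℝ≥0∞) = ENNReal.ofReal ((s n j : ℕ) : ℝ) by
        rw [ENNReal.ofReal_natCast],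
        ← ENNReal.ofReal_mul (Nat.cast_nonneg _)]
      apply ENNReal.ofReal_le_ofReal
      have hkey := (hm n j).2
      have hnneg : (0:ℝ) ≤ (1 + m n j) ^ (-p0) := Real.rpow_nonneg (by linarith) _
      have hA := mul_le_mul_of_nonneg_right hsf.2 hnneg
      rw [← hkey]
      nlinarith [hA]
    have hsum4 : (e n : ℝ≥0∞) * ENNReal.ofReal ((n : ℝ) * (c n : ℝ) * (1 + (n : ℝ)) ^ (-p0))
        ≤ ∑ j ∈ Finset.Icc 1 (e n), (s n j : ℝ≥0∞) * g j := by
      calc (e n : ℝ≥0∞) * ENNReal.ofReal ((n : ℝ) * (c n : ℝ) * (1 + (n : ℝ)) ^ (-p0))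
          = ∑ _j ∈ Finset.Icc 1 (e n),
              ENNReal.ofReal ((n : ℝ) * (c n : ℝ) * (1 + (n : ℝ)) ^ (-p0)) := by
            rw [Finset.sum_const, Nat.card_Icc, nsmul_eq_mul]
            norm_num
      _ ≤ _ := Finset.sum_le_sum hjb
    have hofR : ENNReal.ofReal ((((N : ℝ) + 1) * (c n : ℝ)) / ((N : ℝ) + 2) ^ p0)
        = ENNReal.ofReal ((n : ℝ) * (c n : ℝ) * (1 + (n : ℝ)) ^ (-p0)) := by
      congr 1
      have hb : (1 : ℝ) + (n : ℝ) = (N : ℝ) + 2 := by rw [hn]; push_cast; ring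
      have hb2 : ((n : ℕ) : ℝ) = (N : ℝ) + 1 := by rw [hn]; push_cast; ring
      rw [hb, hb2, Real.rpow_neg (by positivity), div_eq_mul_inv]
    rw [hlppd N, hofR]
    calc (e n : ℝ≥0∞) * ENNReal.ofReal ((n : ℝ) * (c n : ℝ) * (1 + (n : ℝ)) ^ (-p0)) * d N
        = d N * ((e n : ℝ≥0∞)
            * ENNReal.ofReal ((n : ℝ) * (c n : ℝ) * (1 + (n : ℝ)) ^ (-p0))) := by ring
    _ ≤ d N * ∑ j ∈ Finset.Icc 1 (e n), (s n j : ℝ≥0∞) * g j := mul_le_mul' le_rfl hsum4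
    _ = ∑ i : Fin (τ N), d N * g (J n (↑i + 1)) := hsum3.symm
    _ ≤ _ := le_trans hsum2 hsum1
  refine ⟨hpart1, hpart2, hmain, ?_⟩
  rintro ⟨C, hCt, hCb⟩
  obtain ⟨K, hK⟩ := ENNReal.exists_nat_gt hCt
  have hev1 : ∀ᶠ nn : ℕ in atTop, (2 * ((K : ℝ) + 1)) ≤ (e nn : ℝ) :=
    hpart1.eventually_ge_atTop _
  have hev2 : ∀ᶠ nn : ℕ in atTop,
      (1/2 : ℝ) < (nn : ℝ) * (c nn : ℝ) / (1 + (nn : ℝ)) ^ p0 :=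
    hpart2.eventually (eventually_gt_nhds (by norm_num))
  obtain ⟨nn, ⟨h1, h2⟩, h3⟩ := ((hev1.and hev2).and (eventually_ge_atTop 1)).exists
  obtain ⟨N, rfl⟩ : ∃ N, N + 1 = nn := ⟨nn - 1, by omega⟩
  have hineq := le_trans (hmain N) (hCb (dirac τ N))
  rw [hlppd N] at hineq
  have hcc : (e (N + 1) : ℝ≥0∞)
      * ENNReal.ofReal ((((N : ℝ) + 1) * (c (N + 1) : ℝ)) / ((N : ℝ) + 2) ^ p0) ≤ C :=
    (ENNReal.mul_le_mul_iff_left (hd N).1.ne' (hd N).2).mp hineq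
  -- massage h2
  push_cast at h2
  rw [show (1 : ℝ) + ((N : ℝ) + 1) = (N : ℝ) + 2 from by ring] at h2
  have hr2 : ENNReal.ofReal (1/2)
      ≤ ENNReal.ofReal ((((N : ℝ) + 1) * (c (N + 1) : ℝ)) / ((N : ℝ) + 2) ^ p0) :=
    ENNReal.ofReal_le_ofReal h2.le
  have hhalf2 : ENNReal.ofReal (1/2 : ℝ) = (2 : ℝ≥0∞)⁻¹ := by
    rw [one_div, ENNReal.ofReal_inv_of_pos (by norm_num)]
    norm_num
  have hel : ((2 * (K + 1) : ℕ) : ℝ≥0∞) ≤ (e (N + 1) : ℝ≥0∞) := by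
    have : (2 * (K + 1) : ℕ) ≤ e (N + 1) := by exact_mod_cast h1
    exact_mod_cast this
  have hlow : ((K : ℝ≥0∞) + 1) ≤ (e (N + 1) : ℝ≥0∞)
      * ENNReal.ofReal ((((N : ℝ) + 1) * (c (N + 1) : ℝ)) / ((N : ℝ) + 2) ^ p0) := by
    calc (K : ℝ≥0∞) + 1 = (2 : ℝ≥0∞) * ((K : ℝ≥0∞) + 1) * 2⁻¹ := by
          rw [mul_comm (2 : ℝ≥0∞), mul_assoc,
            ENNReal.mul_inv_cancel (by norm_num) (by norm_num), mul_one]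
    _ = ((2 * (K + 1) : ℕ) : ℝ≥0∞) * ENNReal.ofReal (1/2) := by
          rw [hhalf2]
          congr 1
          push_cast
          ring
    _ ≤ (e (N + 1) : ℝ≥0∞)
          * ENNReal.ofReal ((((N : ℝ) + 1) * (c (N + 1) : ℝ)) / ((N : ℝ) + 2) ^ p0) :=
          mul_le_mul' hel hr2
  have hfin : (K : ℝ≥0∞) + 1 ≤ C := le_trans hlow hcc
  exact lt_irrefl _ (lt_of_le_of_lt le_self_add (lt_of_le_of_lt hfin hK))
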